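/- If m is a positive integer such that there exist three pairwise orthogonal vectors in ℚ³ each of squared Euclidean length m, then m is a perfect square. -/

import Mathlib

theorem stmt_8 (m : ℕ) (hm : 0 < m) (V : Fin 3 → Fin 3 → ℚ)
    (horth : ∀ i j : Fin 3, i ≠ j → ∑ k, V i k * V j k = 0)
    (hlen : ∀ i : Fin 3, ∑ k, V i k * V i k = (m : ℚ)) :
    IsSquare m := by
  set M : Matrix (Fin 3) (Fin 3) ℚ := Matrix.of V with hM
  have hmul : M * M.transpose = (m : ℚ) • 1 := by
    ext i j
    simp only [Matrix.mul_apply, Matrix.transpose_apply, Matrix.smul_apply,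
      Matrix.one_apply, hM, Matrix.of_apply]
    by_cases h : i = j
    · subst h; simpa using hlen i
    · simpa [h] using horth i j h
  have hdet : (M.det) ^ 2 = (m : ℚ) ^ 3 := by
    have := congrArg Matrix.det hmul
    rw [Matrix.det_mul, Matrix.det_transpose, Matrix.det_smul, Matrix.det_one] at this
    simpa [sq, Fintype.card_fin] using this
  have hm' : (m : ℚ) ≠ 0 := by exact_mod_cast hm.ne'
  rw [← Rat.isSquare_natCast_iff]
  refine ⟨M.det / m, ?_⟩
  field_simp
  have : (m:ℚ) * ((m:ℚ) * (m:ℚ)) = (m:ℚ)^3 := by ring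
  exact hdet.symm
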